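/- Let d ≥ 4 and let G be a finite simple bipartite graph with parts A and B such that every vertex of A has degree d and every vertex of B has degree 2. Let B' ⊆ B be a subset of maximum size among subsets whose vertices have pairwise disjoint neighborhoods. Then there exists a set S' ⊆ B \ B' with |S'| = |A \ N(B')| = |A| − 2|B'| such that A \ N(B') ⊆ N(S') and every vertex of S' has exactly one neighbor in A \ N(B'); in particular, for S := B' ∪ S' we have N(S) = A and |S| = |A| − |B'|. -/

import Mathlib

open Finset

/-- The vertices of `B'` have pairwise disjoint neighborhoods in `G`. -/
def PDisjNbrs {V : Type*} (G : SimpleGraph V) (B' : Finset V) : Prop :=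
  ∀ b₁ ∈ B', ∀ b₂ ∈ B', b₁ ≠ b₂ → ∀ a, ¬(G.Adj a b₁ ∧ G.Adj a b₂)

/-- `N(S)`: the vertices of `A` adjacent to at least one vertex of `S`. -/
def nbhd {V : Type*} [DecidableEq V] (G : SimpleGraph V) [DecidableRel G.Adj]
    (A S : Finset V) : Finset V :=
  A.filter fun a => ∃ b ∈ S, G.Adj a b

/-- The bipartite subgraph of `G` induced on `A ∪ C` contains a matching saturating
every vertex of `A`, encoded by an injective choice of partners. -/
def SatMatch {V : Type*} (G : SimpleGraph V) (A C : Finset V) : Prop :=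
  ∃ f : V → V, Set.InjOn f ↑A ∧ ∀ a ∈ A, f a ∈ C ∧ G.Adj a (f a)

theorem stmt_17 {V : Type*} [Fintype V] [DecidableEq V] (G : SimpleGraph V)
    [DecidableRel G.Adj] (A B : Finset V) (hdisj : Disjoint A B)
    (hbip : ∀ v w, G.Adj v w → (v ∈ A ∧ w ∈ B) ∨ (v ∈ B ∧ w ∈ A))
    (d : ℕ) (hd : 4 ≤ d)
    (hdegA : ∀ a ∈ A, G.degree a = d) (hdegB : ∀ b ∈ B, G.degree b = 2)
    (B' : Finset V) (hB' : B' ⊆ B) (hpd : PDisjNbrs G B')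
    (hmax : ∀ B'' ⊆ B, PDisjNbrs G B'' → B''.card ≤ B'.card) :
    ∃ S' ⊆ B \ B',
      S'.card = (A \ nbhd G A B').card ∧
      S'.card = A.card - 2 * B'.card ∧
      A \ nbhd G A B' ⊆ nbhd G A S' ∧
      (∀ b ∈ S', (A.filter fun a => a ∉ nbhd G A B' ∧ G.Adj a b).card = 1) ∧
      nbhd G A (B' ∪ S') = A ∧
      (B' ∪ S').card = A.card - B'.card := by
  classical
  have hAB : ∀ b ∈ B, b ∉ A := fun b hb => Finset.disjoint_right.mp hdisj hb
  have hBA : ∀ a ∈ A, a ∉ B := fun a ha => Finset.disjoint_left.mp hdisj ha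
  -- neighbors of vertices of B are in A
  have hNb : ∀ b ∈ B, A.filter (fun a => G.Adj a b) = G.neighborFinset b := by
    intro b hb
    ext x
    simp only [mem_filter, SimpleGraph.mem_neighborFinset]
    constructor
    · rintro ⟨_, h⟩; exact h.symm
    · intro h
      refine ⟨?_, h.symm⟩
      rcases hbip b x h with ⟨hbA, _⟩ | ⟨_, hxA⟩
      · exact absurd hbA (hAB b hb)
      · exact hxA
  have hNbcard : ∀ b ∈ B, (A.filter (fun a => G.Adj a b)).card = 2 := by
    intro b hb
    rw [hNb b hb, SimpleGraph.card_neighborFinset_eq_degree]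
    exact hdegB b hb
  -- card of nbhd B'
  have hnb_eq : nbhd G A B' = B'.biUnion (fun b => A.filter (fun a => G.Adj a b)) := by
    ext x
    simp only [nbhd, mem_filter, mem_biUnion]
    tauto
  have hcard_nbhd : (nbhd G A B').card = 2 * B'.card := by
    rw [hnb_eq, card_biUnion]
    · rw [Finset.sum_congr rfl (fun b hb => hNbcard b (hB' hb))]
      simp [mul_comm]
    · intro b₁ h₁ b₂ h₂ hne
      rw [Function.onFun, Finset.disjoint_left]
      intro a ha₁ ha₂
      simp only [mem_filter] at ha₁ ha₂
      exact hpd b₁ h₁ b₂ h₂ hne a ⟨ha₁.2, ha₂.2⟩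
  -- adjacency to A-vertex means in B and vice versa
  have hadjB : ∀ a ∈ A, ∀ b, G.Adj a b → b ∈ B := by
    intro a ha b h
    rcases hbip a b h with ⟨_, hbB⟩ | ⟨haB, _⟩
    · exact hbB
    · exact absurd haB (hBA a ha)
  have hadjA : ∀ b ∈ B, ∀ a, G.Adj a b → a ∈ A := by
    intro b hb a h
    rcases hbip a b h with ⟨haA, _⟩ | ⟨_, hbA⟩
    · exact haA
    · exact absurd hbA (hAB b hb)
  -- maximality: every b ∈ B \ B' has a neighbor in nbhd G A B'
  have hkey : ∀ b ∈ B, b ∉ B' → ∃ c, G.Adj c b ∧ c ∈ nbhd G A B' := by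
    intro b hbB hbB'
    by_contra hcon
    push_neg at hcon
    have hpd' : PDisjNbrs G (insert b B') := by
      rintro b₁ h₁ b₂ h₂ hne a ⟨ha₁, ha₂⟩
      rcases mem_insert.mp h₁ with rfl | hm₁
      · rcases mem_insert.mp h₂ with rfl | hm₂
        · exact hne rfl
        · have haA : a ∈ A := hadjA b₂ (hB' hm₂) a ha₂
          have : a ∈ nbhd G A B' := mem_filter.mpr ⟨haA, b₂, hm₂, ha₂⟩
          exact hcon a ha₁ this
      · rcases mem_insert.mp h₂ with rfl | hm₂
        · have haA : a ∈ A := hadjA b₁ (hB' hm₁) a ha₁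
          have : a ∈ nbhd G A B' := mem_filter.mpr ⟨haA, b₁, hm₁, ha₁⟩
          exact hcon a ha₂ this
        · exact hpd b₁ hm₁ b₂ hm₂ hne a ⟨ha₁, ha₂⟩
    have := hmax (insert b B') (insert_subset hbB hB') hpd'
    rw [card_insert_of_notMem hbB'] at this
    omega
  -- each b ∈ B \ B' has at most one neighbor outside nbhd B'
  have hT : ∀ b ∈ B, b ∉ B' →
      (A.filter fun a => a ∉ nbhd G A B' ∧ G.Adj a b).card ≤ 1 := by
    intro b hbB hbB'
    obtain ⟨c, hcb, hcN⟩ := hkey b hbB hbB'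
    have hsub : (A.filter fun a => a ∉ nbhd G A B' ∧ G.Adj a b) ⊆
        (G.neighborFinset b).erase c := by
      intro x hx
      simp only [mem_filter] at hx
      refine mem_erase.mpr ⟨?_, SimpleGraph.mem_neighborFinset _ _ _ |>.mpr hx.2.2.symm⟩
      rintro rfl
      exact hx.2.1 hcN
    calc (A.filter fun a => a ∉ nbhd G A B' ∧ G.Adj a b).card
        ≤ ((G.neighborFinset b).erase c).card := card_le_card hsub
      _ = (G.neighborFinset b).card - 1 := card_erase_of_mem
          ((SimpleGraph.mem_neighborFinset _ _ _).mpr hcb.symm)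
      _ ≤ 1 := by
          rw [SimpleGraph.card_neighborFinset_eq_degree, hdegB b hbB]
  -- every a outside nbhd B' has a neighbor b ∈ B \ B' with exactly one such neighbor
  have hch : ∀ a : V, ∃ b, a ∈ A \ nbhd G A B' →
      b ∈ B \ B' ∧ G.Adj a b ∧
      (A.filter fun x => x ∉ nbhd G A B' ∧ G.Adj x b).card = 1 := by
    intro a
    by_cases ha : a ∈ A \ nbhd G A B'
    · obtain ⟨haA, haN⟩ := mem_sdiff.mp ha
      have hdeg : 0 < (G.neighborFinset a).card := by
        rw [SimpleGraph.card_neighborFinset_eq_degree, hdegA a haA]; omega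
      obtain ⟨b, hb⟩ := Finset.card_pos.mp hdeg
      have hab : G.Adj a b := (SimpleGraph.mem_neighborFinset _ _ _).mp hb
      have hbB : b ∈ B := hadjB a haA b hab
      have hbB' : b ∉ B' := by
        intro hmem
        exact haN (mem_filter.mpr ⟨haA, b, hmem, hab⟩)
      refine ⟨b, fun _ => ⟨mem_sdiff.mpr ⟨hbB, hbB'⟩, hab, ?_⟩⟩
      have hge : 1 ≤ (A.filter fun x => x ∉ nbhd G A B' ∧ G.Adj x b).card := by
        refine card_pos.mpr ⟨a, mem_filter.mpr ⟨haA, haN, hab⟩⟩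
      have hle := hT b hbB hbB'
      omega
    · exact ⟨a, fun h => absurd h ha⟩
  choose f hf using hch
  refine ⟨(A \ nbhd G A B').image f, ?_, ?_, ?_, ?_, ?_, ?_, ?_⟩
  · -- S' ⊆ B \ B'
    intro x hx
    obtain ⟨a, ha, rfl⟩ := mem_image.mp hx
    exact (hf a ha).1
  · -- card = card R
    refine card_image_of_injOn ?_
    intro a₁ h₁ a₂ h₂ heq
    simp only [Finset.mem_coe] at h₁ h₂
    obtain ⟨_, hadj₁, hcard₁⟩ := hf a₁ h₁
    obtain ⟨_, hadj₂, _⟩ := hf a₂ h₂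
    obtain ⟨hA₁, hN₁⟩ := mem_sdiff.mp h₁
    obtain ⟨hA₂, hN₂⟩ := mem_sdiff.mp h₂
    have m₁ : a₁ ∈ A.filter fun x => x ∉ nbhd G A B' ∧ G.Adj x (f a₁) :=
      mem_filter.mpr ⟨hA₁, hN₁, hadj₁⟩
    have m₂ : a₂ ∈ A.filter fun x => x ∉ nbhd G A B' ∧ G.Adj x (f a₁) := by
      rw [heq] at *
      exact mem_filter.mpr ⟨hA₂, hN₂, hadj₂⟩
    exact Finset.card_le_one.mp (le_of_eq hcard₁) a₁ m₁ a₂ m₂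
  · -- card = A.card - 2 * B'.card
    have hsubA : nbhd G A B' ⊆ A := filter_subset _ _
    have := card_image_of_injOn (f := f) (s := A \ nbhd G A B') ?_
    · rw [this, card_sdiff_of_subset hsubA, hcard_nbhd]
    · intro a₁ h₁ a₂ h₂ heq
      simp only [Finset.mem_coe] at h₁ h₂
      obtain ⟨_, hadj₁, hcard₁⟩ := hf a₁ h₁
      obtain ⟨_, hadj₂, _⟩ := hf a₂ h₂
      obtain ⟨hA₁, hN₁⟩ := mem_sdiff.mp h₁
      obtain ⟨hA₂, hN₂⟩ := mem_sdiff.mp h₂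
      have m₁ : a₁ ∈ A.filter fun x => x ∉ nbhd G A B' ∧ G.Adj x (f a₁) :=
        mem_filter.mpr ⟨hA₁, hN₁, hadj₁⟩
      have m₂ : a₂ ∈ A.filter fun x => x ∉ nbhd G A B' ∧ G.Adj x (f a₁) := by
        rw [heq] at *
        exact mem_filter.mpr ⟨hA₂, hN₂, hadj₂⟩
      exact Finset.card_le_one.mp (le_of_eq hcard₁) a₁ m₁ a₂ m₂
  · -- R ⊆ nbhd S'
    intro a ha
    obtain ⟨haA, _⟩ := mem_sdiff.mp ha
    exact mem_filter.mpr ⟨haA, f a, mem_image_of_mem f ha, (hf a ha).2.1⟩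
  · -- each b ∈ S' has exactly one neighbor in R
    intro b hb
    obtain ⟨a, ha, rfl⟩ := mem_image.mp hb
    exact (hf a ha).2.2
  · -- nbhd (B' ∪ S') = A
    apply Finset.Subset.antisymm (filter_subset _ _)
    intro a haA
    by_cases haN : a ∈ nbhd G A B'
    · obtain ⟨_, b, hbB', hab⟩ := mem_filter.mp haN
      exact mem_filter.mpr ⟨haA, b, mem_union_left _ hbB', hab⟩
    · have ha : a ∈ A \ nbhd G A B' := mem_sdiff.mpr ⟨haA, haN⟩
      exact mem_filter.mpr ⟨haA, f a, mem_union_right _ (mem_image_of_mem f ha),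
        (hf a ha).2.1⟩
  · -- card of union
    have hdisj' : Disjoint B' ((A \ nbhd G A B').image f) := by
      rw [Finset.disjoint_right]
      intro x hx
      obtain ⟨a, ha, rfl⟩ := mem_image.mp hx
      exact (mem_sdiff.mp (hf a ha).1).2
    rw [card_union_of_disjoint hdisj']
    have hle : 2 * B'.card ≤ A.card := by
      rw [← hcard_nbhd]; exact card_le_card (filter_subset _ _)
    have hSc : ((A \ nbhd G A B').image f).card = A.card - 2 * B'.card := by
      have hinj : Set.InjOn f ↑(A \ nbhd G A B') := by
        intro a₁ h₁ a₂ h₂ heq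
        simp only [Finset.mem_coe] at h₁ h₂
        obtain ⟨_, hadj₁, hcard₁⟩ := hf a₁ h₁
        obtain ⟨_, hadj₂, _⟩ := hf a₂ h₂
        obtain ⟨hA₁, hN₁⟩ := mem_sdiff.mp h₁
        obtain ⟨hA₂, hN₂⟩ := mem_sdiff.mp h₂
        have m₁ : a₁ ∈ A.filter fun x => x ∉ nbhd G A B' ∧ G.Adj x (f a₁) :=
          mem_filter.mpr ⟨hA₁, hN₁, hadj₁⟩
        have m₂ : a₂ ∈ A.filter fun x => x ∉ nbhd G A B' ∧ G.Adj x (f a₁) := by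
          rw [heq] at *
          exact mem_filter.mpr ⟨hA₂, hN₂, hadj₂⟩
        exact Finset.card_le_one.mp (le_of_eq hcard₁) a₁ m₁ a₂ m₂
      have hsubA : nbhd G A B' ⊆ A := filter_subset _ _
      rw [card_image_of_injOn hinj, card_sdiff_of_subset hsubA, hcard_nbhd]
    omega
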